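/- arXiv:1402.1111 — 3 statements merged into one kernel-verified Lean document; each statement's English description precedes it below -/
import Mathlib

section
/- If $f : E \to \mathbb{C}$ is Hölder continuous on a bounded set $E \subset \mathbb{C}$ (i.e., $|f(x)-f(y)| \le M|x-y|^{\alpha}$ for some $M > 0$, $\alpha \in (0,1]$) and $E$ has transfinite diameter zero, then $f(E)$ has transfinite diameter zero. -/
open Filter

/-- `V_n(E)`: the supremum of products of pairwise distances over `n`-point
collections in `E`. -/
noncomputable def VnC (E : Set ℂ) (n : ℕ) : ℝ :=
  sSup {v : ℝ | ∃ z : Fin n → ℂ, (∀ i, z i ∈ E) ∧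
    v = ∏ p ∈ Finset.univ.filter (fun p : Fin n × Fin n => p.1 < p.2), dist (z p.1) (z p.2)}

/-- The sequence `V_n(E)^{2/(n(n-1))}` whose limit is the transfinite diameter. -/
noncomputable def dseqC (E : Set ℂ) (n : ℕ) : ℝ :=
  VnC E n ^ ((2 : ℝ) / ((n : ℝ) * ((n : ℝ) - 1)))

lemma two_mul_card_pairs (n : ℕ) :
    2 * (Finset.univ.filter (fun p : Fin n × Fin n => p.1 < p.2)).card = n * n - n := by
  have hswap : (Finset.univ.filter (fun p : Fin n × Fin n => p.2 < p.1)).card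
      = (Finset.univ.filter (fun p : Fin n × Fin n => p.1 < p.2)).card := by
    apply Finset.card_bij (fun p _ => Prod.swap p)
    · intro p hp; simp at hp ⊢; exact hp
    · intro p hp q hq h
      exact Prod.swap_injective h
    · intro p hp
      refine ⟨Prod.swap p, ?_, by simp⟩
      simp at hp ⊢; exact hp
  have hunion : (Finset.univ.filter (fun p : Fin n × Fin n => p.1 < p.2)) ∪
      (Finset.univ.filter (fun p : Fin n × Fin n => p.2 < p.1))
      = (Finset.univ : Finset (Fin n)).offDiag := by
    ext p
    simp only [Finset.mem_union, Finset.mem_filter, Finset.mem_univ, true_and,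
      Finset.mem_offDiag]
    constructor
    · rintro (h | h)
      · exact ne_of_lt h
      · exact ne_of_gt h
    · exact fun h => h.lt_or_gt
  have hdisj : Disjoint (Finset.univ.filter (fun p : Fin n × Fin n => p.1 < p.2))
      (Finset.univ.filter (fun p : Fin n × Fin n => p.2 < p.1)) := by
    rw [Finset.disjoint_left]
    intro p hp hq
    simp only [Finset.mem_filter] at hp hq
    exact absurd hq.2 (not_lt.mpr hp.2.le)
  have := Finset.card_union_of_disjoint hdisj
  rw [hunion, Finset.offDiag_card, hswap] at this
  simp at this
  omega

theorem VnC_nonneg (E : Set ℂ) (n : ℕ) : 0 ≤ VnC E n := by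
  apply Real.sSup_nonneg
  rintro v ⟨z, hz, rfl⟩
  exact Finset.prod_nonneg fun p _ => dist_nonneg

/-- A Hölder continuous image of a set of transfinite diameter zero has
transfinite diameter zero. -/
theorem transDiam_zero_of_holder (E : Set ℂ) (hE : Bornology.IsBounded E)
    (f : ℂ → ℂ) (M α : ℝ) (hM : 0 < M) (hα : α ∈ Set.Ioc (0 : ℝ) 1)
    (hf : ∀ x ∈ E, ∀ y ∈ E, dist (f x) (f y) ≤ M * dist x y ^ α)
    (h0 : Tendsto (fun n => dseqC E n) atTop (nhds 0)) :
    Tendsto (fun n => dseqC (f '' E) n) atTop (nhds 0) := by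
  obtain ⟨hα0, hα1⟩ := hα
  -- a uniform bound on distances in E
  obtain ⟨C₀, hC₀⟩ := Metric.isBounded_iff.mp hE
  set C : ℝ := max C₀ 0 with hCdef
  have hC : ∀ x ∈ E, ∀ y ∈ E, dist x y ≤ C := fun x hx y hy =>
    (hC₀ hx hy).trans (le_max_left _ _)
  have hC0 : 0 ≤ C := le_max_right _ _
  -- boundedness above of the defining set of VnC E n
  have hbdd : ∀ n, BddAbove {v : ℝ | ∃ z : Fin n → ℂ, (∀ i, z i ∈ E) ∧
      v = ∏ p ∈ Finset.univ.filter (fun p : Fin n × Fin n => p.1 < p.2),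
        dist (z p.1) (z p.2)} := by
    intro n
    refine ⟨C ^ (Finset.univ.filter (fun p : Fin n × Fin n => p.1 < p.2)).card, ?_⟩
    rintro v ⟨z, hz, rfl⟩
    calc ∏ p ∈ Finset.univ.filter (fun p : Fin n × Fin n => p.1 < p.2),
          dist (z p.1) (z p.2)
        ≤ ∏ _p ∈ Finset.univ.filter (fun p : Fin n × Fin n => p.1 < p.2), C :=
          Finset.prod_le_prod (fun p _ => dist_nonneg) (fun p _ => hC _ (hz _) _ (hz _))
      _ = C ^ (Finset.univ.filter (fun p : Fin n × Fin n => p.1 < p.2)).card := by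
          rw [Finset.prod_const]
  -- main pointwise bound
  have key : ∀ n, 2 ≤ n → dseqC (f '' E) n ≤ M * dseqC E n ^ α := by
    intro n hn
    set N : ℕ := (Finset.univ.filter (fun p : Fin n × Fin n => p.1 < p.2)).card with hN
    set c : ℝ := (2 : ℝ) / ((n : ℝ) * ((n : ℝ) - 1)) with hc
    have hn1 : (1 : ℝ) ≤ (n : ℝ) - 1 := by
      have : (2 : ℝ) ≤ (n : ℝ) := by exact_mod_cast hn
      linarith
    have hnpos : (0 : ℝ) < (n : ℝ) * ((n : ℝ) - 1) := by positivity
    have hcpos : 0 < c := by positivity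
    have hNc : (N : ℝ) * c = 1 := by
      have h2N : ((2 * N : ℕ) : ℝ) = ((n * n - n : ℕ) : ℝ) := by
        rw [two_mul_card_pairs n]
      have hle : n ≤ n * n := Nat.le_mul_of_pos_left n (by omega)
      rw [Nat.cast_mul, Nat.cast_sub hle, Nat.cast_mul] at h2N
      push_cast at h2N
      rw [hc]
      field_simp
      nlinarith
    -- V_n(f '' E) ≤ M ^ N * V_n(E) ^ α
    have hV : VnC (f '' E) n ≤ M ^ N * VnC E n ^ α := by
      apply Real.sSup_le
      · rintro v ⟨w, hw, rfl⟩
        choose z hzE hzf using hw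
        calc ∏ p ∈ Finset.univ.filter (fun p : Fin n × Fin n => p.1 < p.2),
              dist (w p.1) (w p.2)
            ≤ ∏ p ∈ Finset.univ.filter (fun p : Fin n × Fin n => p.1 < p.2),
              (M * dist (z p.1) (z p.2) ^ α) := by
              apply Finset.prod_le_prod (fun p _ => dist_nonneg)
              intro p _
              rw [← hzf p.1, ← hzf p.2]
              exact hf _ (hzE p.1) _ (hzE p.2)
          _ = M ^ N * ∏ p ∈ Finset.univ.filter (fun p : Fin n × Fin n => p.1 < p.2),
              dist (z p.1) (z p.2) ^ α := by
              rw [Finset.prod_mul_distrib, Finset.prod_const, hN]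
          _ = M ^ N * (∏ p ∈ Finset.univ.filter (fun p : Fin n × Fin n => p.1 < p.2),
              dist (z p.1) (z p.2)) ^ α := by
              rw [Real.finset_prod_rpow _ _ (fun p _ => dist_nonneg)]
          _ ≤ M ^ N * VnC E n ^ α := by
              apply mul_le_mul_of_nonneg_left _ (by positivity)
              apply Real.rpow_le_rpow (Finset.prod_nonneg fun p _ => dist_nonneg)
                _ hα0.le
              exact le_csSup (hbdd n) ⟨z, hzE, rfl⟩
      · exact mul_nonneg (pow_nonneg hM.le N) (Real.rpow_nonneg (VnC_nonneg E n) α)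
    -- take c-th powers
    have h1 : dseqC (f '' E) n ≤ (M ^ N * VnC E n ^ α) ^ c := by
      unfold dseqC
      exact Real.rpow_le_rpow (VnC_nonneg _ _) hV hcpos.le
    have h2 : (M ^ N * VnC E n ^ α) ^ c = M * dseqC E n ^ α := by
      rw [Real.mul_rpow (pow_nonneg hM.le N) (Real.rpow_nonneg (VnC_nonneg E n) α)]
      have hMc : ((M : ℝ) ^ N) ^ c = M := by
        rw [← Real.rpow_natCast M N, ← Real.rpow_mul hM.le, hNc, Real.rpow_one]
      have hVc : (VnC E n ^ α) ^ c = dseqC E n ^ α := by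
        rw [← Real.rpow_mul (VnC_nonneg _ _), mul_comm α c,
          Real.rpow_mul (VnC_nonneg _ _)]
        rfl
      rw [hMc, hVc]
    rw [h2] at h1
    exact h1
  -- squeeze
  have hupper : Tendsto (fun n => M * dseqC E n ^ α) atTop (nhds 0) := by
    have h1 : Tendsto (fun n => dseqC E n ^ α) atTop (nhds 0) := by
      have hcont : ContinuousAt (fun x : ℝ => x ^ α) 0 :=
        Real.continuousAt_rpow_const 0 α (Or.inr hα0.le)
      have := hcont.tendsto.comp h0
      simpa [Real.zero_rpow hα0.ne', Function.comp_def] using this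
    simpa using h1.const_mul M
  apply tendsto_of_tendsto_of_tendsto_of_le_of_le' tendsto_const_nhds hupper
  · filter_upwards with n
    exact Real.rpow_nonneg (VnC_nonneg _ _) _
  · filter_upwards [eventually_ge_atTop 2] with n hn
    exact key n hn
end

section
/- Let $E \subseteq [a,b]$ be a measurable set and $x_0 \in E$. If for every $\varepsilon$-neighborhood one has $C([x_0-\varepsilon, x_0+\varepsilon] \setminus E)/C([x_0-\varepsilon, x_0+\varepsilon]) \to 0$ as $\varepsilon \to 0$ (i.e., $x_0$ is a density point of $E$ with respect to logarithmic capacity), then $x_0$ is a Lebesgue density point of $E$, i.e., $|(x_0-\varepsilon, x_0+\varepsilon)\setminus E|/(2\varepsilon) \to 0$. -/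
open MeasureTheory Filter

/-- A density point with respect to logarithmic capacity is a Lebesgue density
point. Here `C` is the logarithmic capacity, assumed to satisfy the standard
estimates: `C(S) ≥ A / log(1/|S|)` for measurable sets of small positive
Lebesgue measure, and `C([x₀-δ, x₀+δ]) ≍ (log(1/δ))⁻¹` for small `δ`. -/
theorem lebesgue_density_of_cap_density (C : Set ℝ → ℝ)
    (a b : ℝ) (E : Set ℝ) (hE : MeasurableSet E) (hEs : E ⊆ Set.Icc a b)
    (x₀ : ℝ) (hx₀ : x₀ ∈ E)
    (A δ₀ : ℝ) (hA : 0 < A) (hδ₀ : 0 < δ₀)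
    (hest : ∀ S : Set ℝ, MeasurableSet S → 0 < volume S → volume S < ENNReal.ofReal δ₀ →
      A / Real.log (1 / (volume S).toReal) ≤ C S)
    (c δ₁ : ℝ) (hc : 1 ≤ c) (hδ₁ : 0 < δ₁)
    (hIcc : ∀ δ ∈ Set.Ioo (0 : ℝ) δ₁,
      (1 / c) * (Real.log (1 / δ))⁻¹ ≤ C (Set.Icc (x₀ - δ) (x₀ + δ)) ∧
      C (Set.Icc (x₀ - δ) (x₀ + δ)) ≤ c * (Real.log (1 / δ))⁻¹)
    (hdisp : Tendsto (fun ε : ℝ =>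
        C (Set.Icc (x₀ - ε) (x₀ + ε) \ E) / C (Set.Icc (x₀ - ε) (x₀ + ε)))
      (nhdsWithin 0 (Set.Ioi 0)) (nhds 0)) :
    Tendsto (fun ε : ℝ => (volume (Set.Ioo (x₀ - ε) (x₀ + ε) \ E)).toReal / (2 * ε))
      (nhdsWithin 0 (Set.Ioi 0)) (nhds 0) := by
  have hc0 : (0 : ℝ) < c := lt_of_lt_of_le one_pos hc
  have hr : (0 : ℝ) < A / (2 * c) := by positivity
  -- eventually the capacity ratio is below A/(2c)
  have h1 : ∀ᶠ ε in nhdsWithin (0:ℝ) (Set.Ioi 0),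
      C (Set.Icc (x₀ - ε) (x₀ + ε) \ E) / C (Set.Icc (x₀ - ε) (x₀ + ε)) < A / (2 * c) := by
    have := hdisp (Iio_mem_nhds hr)
    filter_upwards [this] with ε hε using hε
  set t : ℝ := min (min (1/2) δ₁) (δ₀ / 2) with ht
  have ht0 : 0 < t := by
    exact lt_min (lt_min (by norm_num) hδ₁) (by linarith)
  have h2 : ∀ᶠ ε in nhdsWithin (0:ℝ) (Set.Ioi 0), ε ∈ Set.Ioo 0 t :=
    Ioo_mem_nhdsGT_of_mem ⟨le_refl 0, ht0⟩
  -- main eventual bound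
  have key : ∀ᶠ ε in nhdsWithin (0:ℝ) (Set.Ioi 0),
      (volume (Set.Ioo (x₀ - ε) (x₀ + ε) \ E)).toReal / (2 * ε) ≤ ε / 2 := by
    filter_upwards [h1, h2] with ε hratio hε
    obtain ⟨hε0, hεt⟩ := hε
    have hεhalf : ε < 1/2 := lt_of_lt_of_le hεt (le_trans (min_le_left _ _) (min_le_left _ _))
    have hεδ₁ : ε < δ₁ := lt_of_lt_of_le hεt (le_trans (min_le_left _ _) (min_le_right _ _))
    have hεδ₀ : 2 * ε < δ₀ := by
      have := lt_of_lt_of_le hεt (min_le_right _ _); linarith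
    set S : Set ℝ := Set.Icc (x₀ - ε) (x₀ + ε) \ E with hS
    have hmeas : MeasurableSet S := (measurableSet_Icc).diff hE
    have hvolI : volume (Set.Icc (x₀ - ε) (x₀ + ε)) = ENNReal.ofReal (2 * ε) := by
      rw [Real.volume_Icc]; ring_nf
    have hmle : volume S ≤ ENNReal.ofReal (2 * ε) := by
      rw [← hvolI]; exact measure_mono Set.diff_subset
    have hmne : volume S ≠ ⊤ := ne_top_of_le_ne_top ENNReal.ofReal_ne_top hmle
    have hmr : (volume S).toReal ≤ 2 * ε := by
      have := ENNReal.toReal_mono ENNReal.ofReal_ne_top hmle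
      rwa [ENNReal.toReal_ofReal (by linarith)] at this
    have hL : 0 < Real.log (1 / ε) := Real.log_pos (by
      rw [lt_div_iff₀ hε0]; linarith)
    -- claim : (volume S).toReal ≤ ε ^ 2
    have claim : (volume S).toReal ≤ ε ^ 2 := by
      by_contra hcon
      push_neg at hcon
      set m : ℝ := (volume S).toReal with hm
      have hm0 : 0 < m := lt_trans (by positivity) hcon
      have hSpos : 0 < volume S := by
        rw [pos_iff_ne_zero]
        intro h0
        rw [hm, h0] at hm0; simp at hm0
      have hSlt : volume S < ENNReal.ofReal δ₀ := by
        refine lt_of_le_of_lt hmle ?_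
        exact (ENNReal.ofReal_lt_ofReal_iff hδ₀).mpr hεδ₀
      have hCS : A / Real.log (1 / m) ≤ C S := hest S hmeas hSpos hSlt
      have hm1 : m < 1 := by linarith
      have hx : 0 < Real.log (1 / m) := Real.log_pos (by
        rw [lt_div_iff₀ hm0]; linarith)
      have hxy : Real.log (1 / m) < 2 * Real.log (1 / ε) := by
        have h1m : (1:ℝ) / m < 1 / ε ^ 2 := by
          apply one_div_lt_one_div_of_lt (by positivity) hcon
        calc Real.log (1 / m) < Real.log (1 / ε ^ 2) :=
              Real.log_lt_log (by positivity) h1m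
          _ = 2 * Real.log (1 / ε) := by
              rw [show (1:ℝ) / ε ^ 2 = (1 / ε) ^ 2 by ring, Real.log_pow]
              push_cast; ring
      obtain ⟨hlo, hhi⟩ := hIcc ε ⟨hε0, hεδ₁⟩
      set I : Set ℝ := Set.Icc (x₀ - ε) (x₀ + ε)
      have hCI0 : 0 < C I := lt_of_lt_of_le (by positivity) hlo
      -- from the ratio bound
      have hCSlt : C S < A / (2 * c) * C I := (div_lt_iff₀ hCI0).mp hratio
      have hCIle : A / (2 * c) * C I ≤ A / (2 * c) * (c * (Real.log (1 / ε))⁻¹) :=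
        mul_le_mul_of_nonneg_left hhi (le_of_lt hr)
      have heq : A / (2 * c) * (c * (Real.log (1 / ε))⁻¹) = A / (2 * Real.log (1 / ε)) := by
        field_simp
      have hlt2 : A / (2 * Real.log (1 / ε)) < A / Real.log (1 / m) := by
        apply div_lt_div_of_pos_left hA hx
        linarith
      linarith [hCS, hCSlt, hCIle.trans_eq heq, hlt2]
    -- conclude
    have hsub : (volume (Set.Ioo (x₀ - ε) (x₀ + ε) \ E)).toReal ≤ (volume S).toReal := by
      apply ENNReal.toReal_mono hmne
      exact measure_mono (Set.diff_subset_diff_left Set.Ioo_subset_Icc_self)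
    have hfin : (volume (Set.Ioo (x₀ - ε) (x₀ + ε) \ E)).toReal ≤ ε ^ 2 := hsub.trans claim
    calc (volume (Set.Ioo (x₀ - ε) (x₀ + ε) \ E)).toReal / (2 * ε)
        ≤ ε ^ 2 / (2 * ε) := by
          apply div_le_div_of_nonneg_right hfin (by positivity)
      _ = ε / 2 := by field_simp
  -- squeeze
  have hnonneg : ∀ᶠ ε in nhdsWithin (0:ℝ) (Set.Ioi 0),
      0 ≤ (volume (Set.Ioo (x₀ - ε) (x₀ + ε) \ E)).toReal / (2 * ε) := by
    filter_upwards [self_mem_nhdsWithin] with ε (hε : ε ∈ Set.Ioi 0)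
    have : (0:ℝ) < ε := hε
    positivity
  have hhalf : Tendsto (fun ε : ℝ => ε / 2) (nhdsWithin (0:ℝ) (Set.Ioi 0)) (nhds 0) := by
    have : Tendsto (fun ε : ℝ => ε / 2) (nhds (0:ℝ)) (nhds (0 / 2)) :=
      (continuous_id.div_const 2).tendsto 0
    simpa using this.mono_left nhdsWithin_le_nhds
  exact squeeze_zero' hnonneg key hhalf
end

section
/- Every continuous function $\Lambda : [0,2\pi] \to \{z \in \mathbb{C} : |z| = 1\}$ of bounded variation admits a continuous argument function of bounded variation: there exists $\gamma : [0,2\pi] \to \mathbb{R}$ of bounded variation with $\Lambda(\vartheta) = e^{i\gamma(\vartheta)}$ for all $\vartheta$, and moreover $V(\gamma) \le (3\pi/2) \cdot V(\Lambda)$ can be achieved; more generally, every (not necessarily continuous) function $\lambda : \partial\mathbb{D} \to \partial\mathbb{D}$ of bounded variation has an argument function $\alpha_\lambda : \partial\mathbb{D} \to \mathbb{R}$ of bounded variation with $\lambda(\zeta) = e^{i\alpha_\lambda(\zeta)}$. -/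
open Set Real

lemma exp_of_norm_one {w : ℂ} (hw : ‖w‖ = 1) : Complex.exp (Complex.arg w * Complex.I) = w := by
  have := Complex.norm_mul_exp_arg_mul_I w
  rwa [hw, Complex.ofReal_one, one_mul] at this

lemma mul_conj_one {z : ℂ} (hz : ‖z‖ = 1) : z * (starRingEnd ℂ) z = 1 := by
  rw [Complex.mul_conj]
  norm_cast
  rw [Complex.normSq_eq_norm_sq, hz, one_pow]

lemma exp_piece {w z : ℂ} (hw : ‖w‖ = 1) (hz : ‖z‖ = 1) {c : ℝ}
    (hc : Complex.exp (c * Complex.I) = z) :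
    Complex.exp (↑(c + Complex.arg (w * (starRingEnd ℂ) z)) * Complex.I) = w := by
  have h1 : ‖w * (starRingEnd ℂ) z‖ = 1 := by
    rw [norm_mul, hw, RCLike.norm_conj, hz, one_mul]
  calc Complex.exp (↑(c + Complex.arg (w * (starRingEnd ℂ) z)) * Complex.I)
      = Complex.exp (c * Complex.I) *
        Complex.exp (Complex.arg (w * (starRingEnd ℂ) z) * Complex.I) := by
        push_cast; rw [add_mul, Complex.exp_add]
    _ = z * (w * (starRingEnd ℂ) z) := by rw [hc, exp_of_norm_one h1]
    _ = w * (z * (starRingEnd ℂ) z) := by ring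
    _ = w := by rw [mul_conj_one hz, mul_one]

lemma arcsin_lip : ∀ a b : ℝ, |a| ≤ 1/2 → |b| ≤ 1/2 → b ≤ a →
    arcsin a - arcsin b ≤ 2 * (a - b) := by
  intro a b ha hb hba
  have hmono : MonotoneOn (fun x : ℝ => 2 * x - arcsin x) (Icc (-(1/2)) (1/2)) := by
    apply monotoneOn_of_deriv_nonneg (convex_Icc _ _)
    · exact ((continuous_const.mul continuous_id).sub Real.continuous_arcsin).continuousOn
    · intro x hx
      rw [interior_Icc] at hx
      have h1 : x ≠ -1 := by intro h; rw [h] at hx; norm_num at hx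
      have h2 : x ≠ 1 := by intro h; rw [h] at hx; norm_num at hx
      exact (((hasDerivAt_id x).const_mul 2).sub
        (Real.hasDerivAt_arcsin h1 h2)).differentiableAt.differentiableWithinAt
    · intro x hx
      rw [interior_Icc] at hx
      have h1 : x ≠ -1 := by intro h; rw [h] at hx; norm_num at hx
      have h2 : x ≠ 1 := by intro h; rw [h] at hx; norm_num at hx
      have hd : HasDerivAt (fun x : ℝ => 2 * x - arcsin x) (2 - 1 / Real.sqrt (1 - x ^ 2)) x := by
        exact (((hasDerivAt_id' x).const_mul 2).sub (Real.hasDerivAt_arcsin h1 h2)).congr_deriv (by ring)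
      rw [hd.deriv]
      have hx2 : x^2 ≤ 3/4 := by nlinarith [hx.1, hx.2]
      have hsq : (1:ℝ)/2 ≤ Real.sqrt (1 - x^2) := by
        rw [show (1:ℝ)/2 = Real.sqrt (1/4) by
          rw [show (1:ℝ)/4 = (1/2)^2 by norm_num, Real.sqrt_sq (by norm_num)]]
        exact Real.sqrt_le_sqrt (by linarith)
      have hpos : (0:ℝ) < Real.sqrt (1 - x^2) := lt_of_lt_of_le (by norm_num) hsq
      have : 1 / Real.sqrt (1 - x^2) ≤ 2 := by
        rw [div_le_iff₀ hpos]; linarith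
      linarith
  have h1 : b ∈ Icc (-(1/2)) (1/2) := by
    constructor <;> [linarith [abs_le.1 hb |>.1]; linarith [abs_le.1 hb |>.2]]
  have h2 : a ∈ Icc (-(1/2)) (1/2) := by
    constructor <;> [linarith [abs_le.1 ha |>.1]; linarith [abs_le.1 ha |>.2]]
  have := hmono h1 h2 hba
  simp only at this
  linarith

lemma arg_lip {u v : ℂ} (hu : ‖u‖ = 1) (hv : ‖v‖ = 1) (hu1 : ‖u - 1‖ ≤ 1/2)
    (hv1 : ‖v - 1‖ ≤ 1/2) : |Complex.arg u - Complex.arg v| ≤ 2 * ‖u - v‖ := by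
  have hure : (0:ℝ) ≤ u.re := by
    have := Complex.abs_re_le_norm (u - 1)
    simp only [Complex.sub_re, Complex.one_re] at this
    have := abs_le.1 (le_trans this hu1) |>.1
    linarith
  have hvre : (0:ℝ) ≤ v.re := by
    have := Complex.abs_re_le_norm (v - 1)
    simp only [Complex.sub_re, Complex.one_re] at this
    have := abs_le.1 (le_trans this hv1) |>.1
    linarith
  have huim : |u.im| ≤ 1/2 := by
    have := Complex.abs_im_le_norm (u - 1)
    simp only [Complex.sub_im, Complex.one_im, sub_zero] at this
    linarith
  have hvim : |v.im| ≤ 1/2 := by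
    have := Complex.abs_im_le_norm (v - 1)
    simp only [Complex.sub_im, Complex.one_im, sub_zero] at this
    linarith
  have hau : Complex.arg u = arcsin u.im := by
    rw [Complex.arg_of_re_nonneg hure, hu, div_one]
  have hav : Complex.arg v = arcsin v.im := by
    rw [Complex.arg_of_re_nonneg hvre, hv, div_one]
  rw [hau, hav]
  have him : |u.im - v.im| ≤ ‖u - v‖ := by
    have := Complex.abs_im_le_norm (u - v)
    simpa using this
  rcases le_total v.im u.im with h | h
  · have h1 := arcsin_lip u.im v.im huim hvim h
    have h2 : 0 ≤ arcsin u.im - arcsin v.im := by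
      have := Real.monotone_arcsin h; linarith
    rw [abs_of_nonneg h2]
    have h3 : u.im - v.im = |u.im - v.im| := (abs_of_nonneg (by linarith)).symm
    linarith
  · have h1 := arcsin_lip v.im u.im hvim huim h
    have h2 : 0 ≤ arcsin v.im - arcsin u.im := by
      have := Real.monotone_arcsin h; linarith
    rw [abs_sub_comm, abs_of_nonneg h2]
    have h3 : v.im - u.im = |u.im - v.im| := by
      rw [abs_sub_comm]; exact (abs_of_nonneg (by linarith)).symm
    linarith

lemma argMul_lip {z : ℂ} (hz : ‖z‖ = 1) :
    LipschitzOnWith 2 (fun w => Complex.arg (w * (starRingEnd ℂ) z))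
      {w : ℂ | ‖w‖ = 1 ∧ ‖w - z‖ ≤ 1/2} := by
  rw [lipschitzOnWith_iff_dist_le_mul]
  rintro u ⟨hu, hu2⟩ v ⟨hv, hv2⟩
  have hcz : ‖(starRingEnd ℂ) z‖ = 1 := by rw [RCLike.norm_conj, hz]
  have key : ∀ w : ℂ, ‖w‖ = 1 → ‖w - z‖ ≤ 1/2 → ‖w * (starRingEnd ℂ) z - 1‖ ≤ 1/2 := by
    intro w hw hwz
    have h : w * (starRingEnd ℂ) z - 1 = (w - z) * (starRingEnd ℂ) z := by
      rw [sub_mul, mul_conj_one hz]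
    rw [h, norm_mul, hcz, mul_one]
    exact hwz
  have h1 : ‖u * (starRingEnd ℂ) z‖ = 1 := by rw [norm_mul, hu, hcz, mul_one]
  have h2 : ‖v * (starRingEnd ℂ) z‖ = 1 := by rw [norm_mul, hv, hcz, mul_one]
  have hle := arg_lip h1 h2 (key u hu hu2) (key v hv hv2)
  have heq : ‖u * (starRingEnd ℂ) z - v * (starRingEnd ℂ) z‖ = ‖u - v‖ := by
    rw [← sub_mul, norm_mul, hcz, mul_one]
  rw [heq] at hle
  rw [Real.dist_eq, Complex.dist_eq]
  push_cast
  exact hle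


lemma evar_const_add (c : ℝ) (g : ℝ → ℝ) (s : Set ℝ) :
    eVariationOn (fun θ => c + g θ) s = eVariationOn g s := by
  simp only [eVariationOn]
  congr 1
  ext p
  congr 1
  ext i
  simp only [edist_dist, Real.dist_eq]
  ring_nf

lemma evar_insert_left {α : Type*} [LinearOrder α] {E : Type*} [PseudoEMetricSpace E]
    (f : α → E) {s : Set α} {p : α} (hp : ∀ x ∈ s, p ≤ x) {C : ENNReal}
    (hC : ∀ x ∈ s, edist (f p) (f x) ≤ C) :
    eVariationOn f (insert p s) ≤ C + eVariationOn f s := by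
  classical
  apply iSup_le
  rintro ⟨n, u, hu, us⟩
  by_cases hex : ∃ i, i ≤ n ∧ u i ≠ p
  · set k := Nat.find hex with hkdef
    obtain ⟨hkn, hukp⟩ := Nat.find_spec hex
    have hip : ∀ i, i < k → i ≤ n → u i = p := by
      intro i hik hin
      by_contra hne
      exact absurd (Nat.find_le ⟨hin, hne⟩) (not_le.mpr hik)
    have hus : ∀ i, k ≤ i → u i ∈ s := by
      intro i hi
      have huks : u k ∈ s := by
        rcases us k with h | h
        · exact absurd h hukp
        · exact h
      rcases us i with h | h
      · exfalso
        have h1 : u k ≤ u i := hu hi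
        rw [h] at h1
        exact hukp (le_antisymm h1 (hp _ huks))
      · exact h
    rcases Nat.eq_zero_or_pos k with h0 | hpos
    · refine le_trans (eVariationOn.sum_le (f := f) (n := n) hu (fun i => hus i (h0 ▸ Nat.zero_le i))) ?_
      exact le_add_left le_rfl
    · have hk1 : k - 1 + 1 = k := Nat.succ_pred_eq_of_pos hpos
      have hsplit : Finset.range n = Finset.Ico 0 (k-1) ∪ Finset.Ico (k-1) n := by
        rw [Finset.range_eq_Ico, Finset.Ico_union_Ico_eq_Ico (Nat.zero_le _)]
        omega
      have hdisj : Disjoint (Finset.Ico 0 (k-1)) (Finset.Ico (k-1) n) := by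
        apply Finset.Ico_disjoint_Ico_consecutive
      rw [hsplit, Finset.sum_union hdisj]
      have hz : ∀ i ∈ Finset.Ico 0 (k-1), edist (f (u (i+1))) (f (u i)) = 0 := by
        intro i hi
        rw [Finset.mem_Ico] at hi
        have e1 : u i = p := hip i (by omega) (by omega)
        have e2 : u (i+1) = p := hip (i+1) (by omega) (by omega)
        rw [e1, e2, edist_self]
      rw [Finset.sum_eq_zero hz, zero_add]
      have hsplit2 : Finset.Ico (k-1) n = Finset.Ico (k-1) k ∪ Finset.Ico k n := by
        rw [Finset.Ico_union_Ico_eq_Ico (by omega) hkn]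
      rw [hsplit2, Finset.sum_union (Finset.Ico_disjoint_Ico_consecutive _ _ _)]
      have hsing : Finset.Ico (k-1) k = {k-1} := by
        rw [← Nat.Ico_succ_singleton, hk1]
      have h1 : (∑ i ∈ Finset.Ico (k-1) k, edist (f (u (i+1))) (f (u i))) ≤ C := by
        rw [hsing, Finset.sum_singleton, hk1, hip (k-1) (by omega) (by omega), edist_comm]
        exact hC _ (hus k le_rfl)
      have h2 : (∑ i ∈ Finset.Ico k n, edist (f (u (i+1))) (f (u i))) ≤ eVariationOn f s := by
        rw [Finset.sum_Ico_eq_sum_range]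
        have := eVariationOn.sum_le (f := f) (n := n - k) (u := fun j => u (k + j))
          (fun a b hab => hu (by omega)) (fun j => hus (k + j) (by omega))
        refine le_trans (le_of_eq ?_) this
        apply Finset.sum_congr rfl
        intro i _
        congr 1 <;> congr 1 <;> omega
      exact add_le_add h1 h2
  · push_neg at hex
    have : ∀ i ∈ Finset.range n, edist (f (u (i+1))) (f (u i)) = 0 := by
      intro i hi
      rw [Finset.mem_range] at hi
      rw [hex i (by omega), hex (i+1) (by omega), edist_self]
    rw [Finset.sum_eq_zero this]
    exact (zero_le : (0:ENNReal) ≤ _)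

lemma evar_insert_right {α : Type*} [LinearOrder α] {E : Type*} [PseudoEMetricSpace E]
    (f : α → E) {s : Set α} {p : α} (hp : ∀ x ∈ s, x ≤ p) {C : ENNReal}
    (hC : ∀ x ∈ s, edist (f p) (f x) ≤ C) :
    eVariationOn f (insert p s) ≤ C + eVariationOn f s := by
  have hdual := evar_insert_left (α := αᵒᵈ) (f ∘ OrderDual.ofDual)
    (s := OrderDual.ofDual ⁻¹' s) (p := OrderDual.toDual p)
    (fun x hx => hp _ hx) (fun x hx => hC _ hx)
  have h1 : (OrderDual.ofDual ⁻¹' (insert p s) : Set αᵒᵈ)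
      = insert (OrderDual.toDual p) (OrderDual.ofDual ⁻¹' s) := rfl
  rw [← eVariationOn.comp_ofDual f (insert p s), h1,
    ← eVariationOn.comp_ofDual f s] at *
  exact hdual


lemma glue_cont {γ : ℝ → ℝ} {a b c : ℝ} (hab : a ≤ b) (hbc : b ≤ c)
    (h1 : ContinuousOn γ (Icc a b)) (h2 : ContinuousOn γ (Icc b c)) :
    ContinuousOn γ (Icc a c) := by
  have hun : Icc a c = Icc a b ∪ Icc b c := (Icc_union_Icc_eq_Icc hab hbc).symm
  rw [hun]
  intro x hx
  have c1 : ContinuousWithinAt γ (Icc a b) x := by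
    by_cases h : x ∈ Icc a b
    · exact h1 x h
    · apply continuousWithinAt_of_notMem_closure
      rwa [closure_Icc]
  have c2 : ContinuousWithinAt γ (Icc b c) x := by
    by_cases h : x ∈ Icc b c
    · exact h2 x h
    · apply continuousWithinAt_of_notMem_closure
      rwa [closure_Icc]
  exact c1.union c2

lemma half_accum {V : ENNReal} (hV : V ≠ ⊤)
    (h : ∀ m : ℕ, (m : ENNReal) * ENNReal.ofReal (1/2) ≤ V) : False := by
  have hhalf : ENNReal.ofReal (1/2) = 2⁻¹ := by
    rw [one_div, ENNReal.ofReal_inv_of_pos two_pos, ENNReal.ofReal_ofNat]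
  obtain ⟨K, hK⟩ := ENNReal.exists_nat_gt hV
  have h2 := h (2 * K)
  rw [hhalf] at h2
  have : ((2 * K : ℕ) : ENNReal) * 2⁻¹ = K := by
    push_cast
    rw [mul_comm (2 : ENNReal), mul_assoc, ENNReal.mul_inv_cancel (by norm_num) (by norm_num),
      mul_one]
  rw [this] at h2
  exact absurd hK (not_lt.mpr h2)

lemma exists_Ioc_small {E : Type*} [PseudoEMetricSpace E] (f : ℝ → E) {T : ℝ}
    (hf : eVariationOn f (Icc 0 T) ≠ ⊤) {a : ℝ} (ha : 0 ≤ a) (haT : a < T) :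
    ∃ b, a < b ∧ b ≤ T ∧ eVariationOn f (Ioc a b) ≤ ENNReal.ofReal (1/2) := by
  by_contra hcon
  push_neg at hcon
  have key : ∀ k : ℕ, ∃ b, a < b ∧ b ≤ T ∧
      eVariationOn f (Ioc a b) + k * ENNReal.ofReal (1/2) ≤ eVariationOn f (Ioc a T) := by
    intro k
    induction k with
    | zero => exact ⟨T, haT, le_rfl, by simp⟩
    | succ k ih =>
      obtain ⟨b, hab, hbT, hle⟩ := ih
      have hlt := hcon b hab hbT
      have hlt' : ENNReal.ofReal (1/2) <
          ⨆ (p : ℕ × {u : ℕ → ℝ // Monotone u ∧ ∀ i, u i ∈ Ioc a b}),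
            ∑ i ∈ Finset.range p.1, edist (f (p.2.1 (i+1))) (f (p.2.1 i)) := hlt
      obtain ⟨⟨m, u, hu, us⟩, hsum⟩ := lt_iSup_iff.mp hlt'
      set b' := (a + u 0) / 2 with hb'def
      have hau0 : a < u 0 := (us 0).1
      have hab' : a < b' := by rw [hb'def]; linarith
      have hb'u0 : b' < u 0 := by rw [hb'def]; linarith
      have hb'T : b' ≤ T := le_trans (le_of_lt (lt_of_lt_of_le hb'u0 (us 0).2)) hbT
      refine ⟨b', hab', hb'T, ?_⟩
      have h1 : (∑ i ∈ Finset.range m, edist (f (u (i+1))) (f (u i))) ≤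
          eVariationOn f (Ioc b' b) :=
        eVariationOn.sum_le (f := f) (n := m) hu
          (fun i => ⟨lt_of_lt_of_le hb'u0 (hu (Nat.zero_le i)), (us i).2⟩)
      have h2 : eVariationOn f (Ioc a b') + eVariationOn f (Ioc b' b) ≤
          eVariationOn f (Ioc a b) := by
        have h3 := eVariationOn.add_le_union f (s := Ioc a b') (t := Ioc b' b)
          (fun x hx y hy => le_trans hx.2 (le_of_lt hy.1))
        rwa [Set.Ioc_union_Ioc_eq_Ioc (le_of_lt hab')
          (le_trans (le_of_lt hb'u0) (us 0).2)] at h3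
      calc eVariationOn f (Ioc a b') + (k + 1 : ℕ) * ENNReal.ofReal (1/2)
          = (eVariationOn f (Ioc a b') + ENNReal.ofReal (1/2)) + k * ENNReal.ofReal (1/2) := by
            push_cast; ring
        _ ≤ (eVariationOn f (Ioc a b') + eVariationOn f (Ioc b' b)) + k * ENNReal.ofReal (1/2) :=
            add_le_add_left (add_le_add_right (le_trans (le_of_lt hsum) h1) _) _
        _ ≤ eVariationOn f (Ioc a b) + k * ENNReal.ofReal (1/2) := add_le_add h2 le_rfl
        _ ≤ eVariationOn f (Ioc a T) := hle
  have hsub : Ioc a T ⊆ Icc 0 T := fun x hx => ⟨le_trans ha (le_of_lt hx.1), hx.2⟩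
  have hfin : eVariationOn f (Ioc a T) ≠ ⊤ :=
    ne_top_of_le_ne_top hf (eVariationOn.mono f hsub)
  apply half_accum hfin
  intro m
  obtain ⟨b, _, _, hb⟩ := key m
  exact le_trans (le_add_left le_rfl) hb


lemma close_one {w z : ℂ} (hw : ‖w‖ = 1) (hz : ‖z‖ = 1) (h : ‖w - z‖ ≤ 1/2) :
    ‖w * (starRingEnd ℂ) z - 1‖ ≤ 1/2 := by
  have he : w * (starRingEnd ℂ) z - 1 = (w - z) * (starRingEnd ℂ) z := by
    rw [sub_mul, mul_conj_one hz]
  rw [he, norm_mul, RCLike.norm_conj, hz, mul_one]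
  exact h


lemma exists_partition {E : Type*} [PseudoEMetricSpace E] (f : ℝ → E) {T : ℝ}
    (hT : 0 < T) (hf : eVariationOn f (Icc 0 T) ≠ ⊤) :
    ∃ (N : ℕ) (τ : ℕ → ℝ), τ 0 = 0 ∧ τ N = T ∧
      (∀ j k, j ≤ k → k ≤ N → τ j ≤ τ k) ∧
      (∀ j, 0 ≤ τ j ∧ τ j ≤ T) ∧
      (∀ j < N, τ j < τ (j+1)) ∧
      (∀ j < N, eVariationOn f (Ioo (τ j) (τ (j+1))) ≤ ENNReal.ofReal (1/2)) := by
  classical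
  set B : ℝ → Set ℝ := fun a => {b | (a < b ∧ b ≤ T) ∧
    eVariationOn f (Ioc a b) ≤ ENNReal.ofReal (1/2)} with hBdef
  have hBne : ∀ a, 0 ≤ a → a < T → (B a).Nonempty := by
    intro a h1 h2
    obtain ⟨b, hb1, hb2, hb3⟩ := exists_Ioc_small f hf h1 h2
    exact ⟨b, ⟨hb1, hb2⟩, hb3⟩
  have hBbdd : ∀ a, BddAbove (B a) := fun a => ⟨T, fun x hx => hx.1.2⟩
  set g : ℝ → ℝ := fun a => sSup (B a) with hgdef
  have hg1 : ∀ a, 0 ≤ a → a < T → a < g a := by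
    intro a h1 h2
    obtain ⟨b, hb⟩ := hBne a h1 h2
    exact lt_of_lt_of_le hb.1.1 (le_csSup (hBbdd a) hb)
  have hg2 : ∀ a, 0 ≤ a → a < T → g a ≤ T :=
    fun a h1 h2 => csSup_le (hBne a h1 h2) (fun x hx => hx.1.2)
  set τ : ℕ → ℝ := fun k => Nat.rec 0 (fun _ p => if p < T then g p else T) k with hτdef
  have hτ0 : τ 0 = 0 := rfl
  have hτsucc : ∀ k, τ (k+1) = if τ k < T then g (τ k) else T := fun k => rfl
  have hτrange : ∀ k, 0 ≤ τ k ∧ τ k ≤ T := by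
    intro k
    induction k with
    | zero => exact ⟨le_rfl, le_of_lt hT⟩
    | succ k ih =>
      rw [hτsucc]
      split_ifs with h
      · exact ⟨le_trans ih.1 (le_of_lt (hg1 _ ih.1 h)), hg2 _ ih.1 h⟩
      · exact ⟨le_of_lt hT, le_rfl⟩
  have hτstep : ∀ k, τ k < T → τ k < τ (k+1) := by
    intro k h
    rw [hτsucc, if_pos h]
    exact hg1 _ (hτrange k).1 h
  have hτstay : ∀ k, ¬ τ k < T → τ (k+1) = T := by
    intro k h
    rw [hτsucc, if_neg h]
  -- oscillation bound
  have hosc : ∀ k, τ k < T → eVariationOn f (Ioo (τ k) (τ (k+1))) ≤ ENNReal.ofReal (1/2) := by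
    intro k h
    rw [hτsucc, if_pos h]
    apply iSup_le
    rintro ⟨m, u, hu, us⟩
    obtain ⟨b, hbB, hub⟩ := exists_lt_of_lt_csSup (hBne _ (hτrange k).1 h) (us m).2
    have hsum : (∑ i ∈ Finset.range m, edist (f (u (i+1))) (f (u i)))
        = ∑ i ∈ Finset.range m, edist (f (u (min (i+1) m))) (f (u (min i m))) := by
      apply Finset.sum_congr rfl
      intro i hi
      rw [Finset.mem_range] at hi
      rw [min_eq_left (by omega), min_eq_left (by omega)]
    rw [hsum]
    refine le_trans (eVariationOn.sum_le (f := f) (n := m) (u := fun i => u (min i m))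
      (fun x y hxy => hu (min_le_min hxy le_rfl)) (fun i => ?_)) hbB.2
    exact ⟨(us _).1, le_trans (le_of_lt (lt_of_le_of_lt (hu (min_le_right i m)) hub)) le_rfl⟩
  -- progress
  have hprog : ∀ k, τ (k+1) < T → ENNReal.ofReal (1/2) < eVariationOn f (Ioc (τ k) (τ (k+2))) := by
    intro k h1
    have hk : τ k < T := by
      by_contra hc
      rw [hτstay k hc] at h1
      exact absurd h1 (lt_irrefl T)
    have e1 : τ (k+1) = g (τ k) := by rw [hτsucc, if_pos hk]
    have e2 : τ (k+2) = g (τ (k+1)) := by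
      have h := hτsucc (k+1)
      rw [if_pos h1] at h
      exact h
    have h2 : τ (k+1) < τ (k+2) := hτstep (k+1) h1
    have hnot : τ (k+2) ∉ B (τ k) := by
      intro hmem
      have hle : τ (k + 2) ≤ τ (k + 1) := by
        rw [e1]
        exact le_csSup (hBbdd (τ k)) hmem
      exact absurd h2 (not_lt.mpr hle)
    rw [hBdef] at hnot
    simp only [mem_setOf_eq, not_and, not_le] at hnot
    exact hnot ⟨lt_trans (hτstep k hk) h2, (hτrange (k+2)).2⟩
  -- termination
  have hterm : ∃ k, τ k = T := by
    by_contra hc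
    push_neg at hc
    have hlt : ∀ k, τ k < T := fun k => lt_of_le_of_ne (hτrange k).2 (hc k)
    have hmono : Monotone τ := monotone_nat_of_le_succ (fun k => le_of_lt (hτstep k (hlt k)))
    have grow : ∀ m : ℕ, (m : ENNReal) * ENNReal.ofReal (1/2) ≤
        eVariationOn f (Ioc (τ 0) (τ (2*m))) := by
      intro m
      induction m with
      | zero => simp
      | succ m ih =>
        have hm2 : 2 * (m+1) = 2*m + 2 := by ring
        rw [hm2]
        have hun := eVariationOn.add_le_union f (s := Ioc (τ 0) (τ (2*m)))
          (t := Ioc (τ (2*m)) (τ (2*m+2))) (fun x hx y hy => le_trans hx.2 (le_of_lt hy.1))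
        rw [Set.Ioc_union_Ioc_eq_Ioc (hmono (Nat.zero_le (2*m)))
          (hmono (show 2*m ≤ 2*m+2 by omega))] at hun
        refine le_trans ?_ hun
        push_cast
        rw [add_mul, one_mul]
        exact add_le_add ih (le_of_lt (hprog (2*m) (hlt (2*m+1))))
    have grow' : ∀ m : ℕ, (m : ENNReal) * ENNReal.ofReal (1/2) ≤ eVariationOn f (Icc 0 T) := by
      intro m
      refine le_trans (grow m) (eVariationOn.mono f ?_)
      intro x hx
      rw [hτ0] at hx
      exact ⟨le_of_lt hx.1, le_trans hx.2 (hτrange _).2⟩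
    exact half_accum hf grow'
  set N := Nat.find hterm with hNdef
  have hN : τ N = T := Nat.find_spec hterm
  have hjN : ∀ j, j < N → τ j < T :=
    fun j hj => lt_of_le_of_ne (hτrange j).2 (Nat.find_min hterm hj)
  have hmono : ∀ j k, j ≤ k → k ≤ N → τ j ≤ τ k := by
    intro j k hjk hkN
    induction k with
    | zero =>
      have hj0 : j = 0 := by omega
      rw [hj0]
    | succ k ih =>
      rcases Nat.eq_or_lt_of_le hjk with h | h
      · rw [h]
      · have h1 : τ j ≤ τ k := ih (by omega) (by omega)
        exact le_trans h1 (le_of_lt (hτstep k (hjN k (by omega))))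
  refine ⟨N, τ, hτ0, hN, hmono, hτrange, fun j hj => hτstep j (hjN j hj),
    fun j hj => hosc j (hjN j hj)⟩

lemma part1 (Λ : ℝ → ℂ)
    (hmap : ∀ θ ∈ Icc (0 : ℝ) (2 * π), ‖Λ θ‖ = 1)
    (hBV : BoundedVariationOn Λ (Icc 0 (2 * π)))
    (hcont : ContinuousOn Λ (Icc 0 (2 * π))) :
      ∃ γ : ℝ → ℝ, ContinuousOn γ (Icc 0 (2 * π)) ∧
        BoundedVariationOn γ (Icc 0 (2 * π)) ∧
        (∀ θ ∈ Icc (0 : ℝ) (2 * π), Λ θ = Complex.exp (γ θ * Complex.I)) ∧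
        eVariationOn γ (Icc 0 (2 * π)) ≤
          ENNReal.ofReal (3 * π / 2) * eVariationOn Λ (Icc 0 (2 * π)) := by
  classical
  have hπ : 0 < π := pi_pos
  have hucont := (isCompact_Icc (a := (0:ℝ)) (b := 2*π)).uniformContinuousOn_of_continuous hcont
  rw [Metric.uniformContinuousOn_iff] at hucont
  obtain ⟨δ, hδ0, hδ⟩ := hucont (1/2) (by norm_num)
  obtain ⟨m, hm⟩ := exists_nat_gt (2*π/δ)
  set e : ℝ := 2*π/(m+1) with hedef
  have hm1 : (0:ℝ) < m+1 := by positivity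
  have he0 : 0 < e := by rw [hedef]; positivity
  have heδ : e < δ := by
    rw [hedef, div_lt_iff₀ hm1]
    have h1 : 2*π/δ < (m:ℝ)+1 := lt_of_lt_of_le hm (by linarith)
    rw [div_lt_iff₀ hδ0] at h1
    linarith
  set t : ℕ → ℝ := fun j => j * e with htdef
  have ht0 : t 0 = 0 := by simp [htdef]
  have htsucc : ∀ j : ℕ, t (j+1) = t j + e := by
    intro j; simp only [htdef]; push_cast; ring
  have htn : t (m+1) = 2*π := by
    simp only [htdef, hedef]; push_cast; field_simp
  have htmono : ∀ j k : ℕ, j ≤ k → t j ≤ t k := by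
    intro j k h
    simp only [htdef]
    have hc : (j:ℝ) ≤ k := by exact_mod_cast h
    exact mul_le_mul_of_nonneg_right hc (le_of_lt he0)
  have htmem : ∀ j, j ≤ m+1 → t j ∈ Icc (0:ℝ) (2*π) := by
    intro j hj
    constructor
    · simp only [htdef]; positivity
    · rw [← htn]; exact htmono j (m+1) hj
  have hIccsub : ∀ j, j ≤ m → Icc (t j) (t (j+1)) ⊆ Icc (0:ℝ) (2*π) := by
    intro j hj x hx
    exact ⟨le_trans (htmem j (by omega)).1 hx.1, le_trans hx.2 (htmem (j+1) (by omega)).2⟩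
  have hclose : ∀ j, j ≤ m → ∀ θ ∈ Icc (t j) (t (j+1)), ‖Λ θ - Λ (t j)‖ ≤ 1/2 := by
    intro j hj θ hθ
    have hθmem : θ ∈ Icc (0:ℝ) (2*π) := hIccsub j hj hθ
    have hd : dist θ (t j) < δ := by
      rw [Real.dist_eq, abs_of_nonneg (by linarith [hθ.1])]
      have h2 := hθ.2
      rw [htsucc] at h2
      linarith
    have := hδ θ hθmem (t j) (htmem j (by omega)) hd
    rw [dist_eq_norm] at this
    exact le_of_lt this
  -- the lifted values at gridpoints
  set c : ℕ → ℝ := fun j => Nat.rec (Complex.arg (Λ 0))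
    (fun k ck => ck + Complex.arg (Λ (t (k+1)) * (starRingEnd ℂ) (Λ (t k)))) j with hcdef
  have hcsucc : ∀ j, c (j+1) = c j + Complex.arg (Λ (t (j+1)) * (starRingEnd ℂ) (Λ (t j))) :=
    fun j => rfl
  have hcexp : ∀ j, j ≤ m+1 → Complex.exp ((c j : ℂ) * Complex.I) = Λ (t j) := by
    intro j hj
    induction j with
    | zero =>
      rw [ht0]
      exact exp_of_norm_one (hmap 0 ⟨le_rfl, by positivity⟩)
    | succ j ih =>
      rw [hcsucc]
      exact exp_piece (hmap _ (htmem (j+1) hj)) (hmap _ (htmem j (by omega))) (ih (by omega))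
  -- index function
  set J : ℝ → ℕ := fun θ => min m ⌊θ / e⌋₊ with hJdef
  have hJle : ∀ θ, J θ ≤ m := fun θ => min_le_left _ _
  have hJ1 : ∀ θ, 0 ≤ θ → t (J θ) ≤ θ := by
    intro θ hθ
    have h1 : ((J θ : ℕ) : ℝ) ≤ θ / e := by
      refine le_trans ?_ (Nat.floor_le (by positivity))
      exact_mod_cast min_le_right m ⌊θ / e⌋₊
    calc t (J θ) = (J θ : ℝ) * e := rfl
      _ ≤ (θ/e)*e := mul_le_mul_of_nonneg_right h1 (le_of_lt he0)
      _ = θ := by field_simp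
  have hJ2 : ∀ θ, θ ∈ Icc (0:ℝ) (2*π) → θ ≤ t (J θ + 1) := by
    intro θ hθ
    rcases le_or_gt (⌊θ/e⌋₊) m with h | h
    · have hJeq : J θ = ⌊θ/e⌋₊ := min_eq_right h
      rw [hJeq]
      have h2 : θ/e < ⌊θ/e⌋₊ + 1 := Nat.lt_floor_add_one _
      rw [div_lt_iff₀ he0] at h2
      calc θ ≤ ((⌊θ/e⌋₊ : ℝ) + 1) * e := le_of_lt h2
        _ = t (⌊θ/e⌋₊ + 1) := by simp only [htdef]; push_cast; ring
    · have hJeq : J θ = m := min_eq_left (le_of_lt h)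
      rw [hJeq, htn]
      exact hθ.2
  have hJeq : ∀ j, j ≤ m → ∀ θ, t j ≤ θ → θ < t (j+1) → J θ = j := by
    intro j hj θ h1 h2
    have hθ0 : 0 ≤ θ := le_trans (htmem j (by omega)).1 h1
    have hfl : ⌊θ/e⌋₊ = j := by
      rw [Nat.floor_eq_iff (by positivity)]
      constructor
      · rw [le_div_iff₀ he0]
        exact h1
      · rw [div_lt_iff₀ he0]
        calc θ < t (j+1) := h2
          _ = ((j:ℝ)+1) * e := by simp only [htdef]; push_cast; ring
    simp only [hJdef, hfl]
    exact min_eq_right hj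
  -- EqOn on pieces
  have hEqOn : ∀ j, j ≤ m → EqOn
      (fun θ => c (J θ) + Complex.arg (Λ θ * (starRingEnd ℂ) (Λ (t (J θ)))))
      (fun θ => c j + Complex.arg (Λ θ * (starRingEnd ℂ) (Λ (t j))))
      (Icc (t j) (t (j+1))) := by
    intro j hj θ hθ
    rcases lt_or_eq_of_le hθ.2 with h | h
    · simp only
      rw [hJeq j hj θ hθ.1 h]
    · -- θ = t (j+1)
      have hfl : ⌊θ/e⌋₊ = j + 1 := by
        rw [h]
        have : t (j+1) / e = ((j+1 : ℕ) : ℝ) := by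
          simp only [htdef]
          field_simp
        rw [this, Nat.floor_natCast]
      have hJv : J θ = min m (j+1) := by simp only [hJdef, hfl]
      rcases Nat.lt_or_ge j m with hlt | hge
      · have hJv2 : J θ = j + 1 := by rw [hJv]; exact min_eq_right (by omega)
        simp only [hJv2]
        rw [h]
        have hone : Λ (t (j+1)) * (starRingEnd ℂ) (Λ (t (j+1))) = 1 :=
          mul_conj_one (hmap _ (htmem (j+1) (by omega)))
        rw [hone, Complex.arg_one, add_zero, hcsucc]
      · have hjm : j = m := by omega
        have hJv2 : J θ = j := by rw [hJv, hjm]; exact min_eq_left (by omega)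
        simp only [hJv2]
  -- maps into lipschitz domain
  have hmapsTo : ∀ j, j ≤ m → MapsTo Λ (Icc (t j) (t (j+1)))
      {w : ℂ | ‖w‖ = 1 ∧ ‖w - Λ (t j)‖ ≤ 1/2} := by
    intro j hj θ hθ
    exact ⟨hmap θ (hIccsub j hj hθ), hclose j hj θ hθ⟩
  -- continuity on pieces
  have hctsγ : ∀ j, j ≤ m → ContinuousOn
      (fun θ => c (J θ) + Complex.arg (Λ θ * (starRingEnd ℂ) (Λ (t (J θ)))))
      (Icc (t j) (t (j+1))) := by
    intro j hj
    refine ContinuousOn.congr ?_ (hEqOn j hj)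
    apply continuousOn_const.add
    have hg : ContinuousOn (fun θ => Λ θ * (starRingEnd ℂ) (Λ (t j))) (Icc (t j) (t (j+1))) :=
      (hcont.mono (hIccsub j hj)).mul continuousOn_const
    intro x hx
    have hlt : ‖Λ x * (starRingEnd ℂ) (Λ (t j)) - 1‖ ≤ 1/2 :=
      close_one (hmap x (hIccsub j hj hx)) (hmap _ (htmem j (by omega))) (hclose j hj x hx)
    have hre : (0:ℝ) < (Λ x * (starRingEnd ℂ) (Λ (t j))).re := by
      have h1 := Complex.abs_re_le_norm (Λ x * (starRingEnd ℂ) (Λ (t j)) - 1)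
      simp only [Complex.sub_re, Complex.one_re] at h1
      have h2 := abs_le.1 (le_trans h1 hlt) |>.1
      linarith
    have hslit : (Λ x * (starRingEnd ℂ) (Λ (t j))) ∈ Complex.slitPlane := Or.inl hre
    exact ContinuousAt.comp_continuousWithinAt (g := Complex.arg)
      (f := fun θ => Λ θ * (starRingEnd ℂ) (Λ (t j))) (Complex.continuousAt_arg hslit) (hg x hx)
  have hctsAll : ∀ j, j ≤ m+1 → ContinuousOn
      (fun θ => c (J θ) + Complex.arg (Λ θ * (starRingEnd ℂ) (Λ (t (J θ)))))
      (Icc (t 0) (t j)) := by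
    intro j hj
    induction j with
    | zero => rw [Set.Icc_self]; exact continuousOn_singleton _ _
    | succ j ih =>
      exact glue_cont (htmono 0 j (by omega)) (htmono j (j+1) (by omega))
        (ih (by omega)) (hctsγ j (by omega))
  -- variation on pieces
  have hvarpiece : ∀ j, j ≤ m →
      eVariationOn (fun θ => c (J θ) + Complex.arg (Λ θ * (starRingEnd ℂ) (Λ (t (J θ)))))
        (Icc (t j) (t (j+1))) ≤ 2 * eVariationOn Λ (Icc (t j) (t (j+1))) := by
    intro j hj
    rw [eVariationOn.eq_of_eqOn (hEqOn j hj), evar_const_add]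
    have hlip := (argMul_lip (hmap _ (htmem j (by omega)))).comp_eVariationOn_le (hmapsTo j hj)
    simpa [Function.comp_def] using hlip
  have hvartot : ∀ j, j ≤ m+1 →
      eVariationOn (fun θ => c (J θ) + Complex.arg (Λ θ * (starRingEnd ℂ) (Λ (t (J θ)))))
        (Icc (t 0) (t j)) ≤ 2 * eVariationOn Λ (Icc (t 0) (t j)) := by
    intro j hj
    induction j with
    | zero =>
      rw [Set.Icc_self, eVariationOn.subsingleton _ (subsingleton_singleton)]
      exact (zero_le : (0:ENNReal) ≤ _)
    | succ j ih =>
      have e1 := eVariationOn.Icc_add_Icc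
        (fun θ => c (J θ) + Complex.arg (Λ θ * (starRingEnd ℂ) (Λ (t (J θ)))))
        (s := univ) (htmono 0 j (by omega)) (htmono j (j+1) (by omega)) (mem_univ (t j))
      have e2 := eVariationOn.Icc_add_Icc Λ
        (s := univ) (htmono 0 j (by omega)) (htmono j (j+1) (by omega)) (mem_univ (t j))
      simp only [univ_inter] at e1 e2
      rw [← e1, ← e2, mul_add]
      exact add_le_add (ih (by omega)) (hvarpiece j (by omega))
  have hfinal := hvartot (m+1) le_rfl
  rw [ht0, htn] at hfinal
  have h2le : (2 : ENNReal) ≤ ENNReal.ofReal (3*π/2) := by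
    have : (2 : ENNReal) = ENNReal.ofReal 2 := by
      rw [ENNReal.ofReal_ofNat]
    rw [this]
    apply ENNReal.ofReal_le_ofReal
    nlinarith [pi_gt_three]
  refine ⟨fun θ => c (J θ) + Complex.arg (Λ θ * (starRingEnd ℂ) (Λ (t (J θ)))), ?_, ?_, ?_, ?_⟩
  · have := hctsAll (m+1) le_rfl
    rwa [ht0, htn] at this
  · refine ne_top_of_le_ne_top (ENNReal.mul_ne_top ?_ hBV) hfinal
    exact ENNReal.ofNat_ne_top
  · intro θ hθ
    have h1 : t (J θ) ≤ θ := hJ1 θ hθ.1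
    have h2 : θ ≤ t (J θ + 1) := hJ2 θ hθ
    exact (exp_piece (hmap θ hθ) (hmap _ (htmem (J θ) (by have := hJle θ; omega)))
      (hcexp (J θ) (by have := hJle θ; omega))).symm
  · exact le_trans hfinal (mul_le_mul_left h2le _)

lemma part2 (Λ : ℝ → ℂ)
    (hmap : ∀ θ ∈ Icc (0 : ℝ) (2 * π), ‖Λ θ‖ = 1)
    (hBV : BoundedVariationOn Λ (Icc 0 (2 * π))) :
    ∃ α : ℝ → ℝ, BoundedVariationOn α (Icc 0 (2 * π)) ∧
      ∀ θ ∈ Icc (0 : ℝ) (2 * π), Λ θ = Complex.exp (α θ * Complex.I) := by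
  classical
  have hπ : 0 < π := pi_pos
  obtain ⟨N, τ, hτ0, hτN, hmono, hrange, hstrict, hosc⟩ :=
    exists_partition Λ (by positivity : (0:ℝ) < 2*π) hBV
  set p : ℝ → ℕ → Prop := fun θ j => j < N ∧ τ j < θ ∧ θ < τ (j+1) with hpdef
  set z : ℕ → ℂ := fun j => Λ ((τ j + τ (j+1))/2) with hzdef
  have hsmid : ∀ j, j < N → (τ j + τ (j+1))/2 ∈ Ioo (τ j) (τ (j+1)) :=
    fun j hj => ⟨by linarith [hstrict j hj], by linarith [hstrict j hj]⟩
  have hIooSub : ∀ j, j < N → Ioo (τ j) (τ (j+1)) ⊆ Icc (0:ℝ) (2*π) := by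
    intro j hj x hx
    exact ⟨le_trans (hrange j).1 (le_of_lt hx.1), le_trans (le_of_lt hx.2) (hrange (j+1)).2⟩
  have hz1 : ∀ j, j < N → ‖z j‖ = 1 := fun j hj => hmap _ (hIooSub j hj (hsmid j hj))
  have hclose2 : ∀ j, j < N → ∀ θ ∈ Ioo (τ j) (τ (j+1)), ‖Λ θ - z j‖ ≤ 1/2 := by
    intro j hj θ hθ
    have h1 := eVariationOn.edist_le Λ hθ (hsmid j hj)
    have h2 := le_trans h1 (hosc j hj)
    rw [edist_dist] at h2
    have h3 : dist (Λ θ) (z j) ≤ 1/2 :=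
      (ENNReal.ofReal_le_ofReal_iff (by norm_num)).mp h2
    rwa [dist_eq_norm] at h3
  set α : ℝ → ℝ := fun θ => if h : ∃ j, p θ j then
      Complex.arg (z (Nat.find h)) + Complex.arg (Λ θ * (starRingEnd ℂ) (z (Nat.find h)))
    else Complex.arg (Λ θ) with hαdef
  have huniq : ∀ θ j k, p θ j → p θ k → j = k := by
    intro θ j k hj hk
    by_contra hne
    rcases Nat.lt_or_ge j k with h | h
    · have h1 : τ (j+1) ≤ τ k := hmono (j+1) k h (le_of_lt hk.1)
      linarith [hj.2.2, hk.2.1]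
    · have h' : k < j := by omega
      have h1 : τ (k+1) ≤ τ j := hmono (k+1) j h' (le_of_lt hj.1)
      linarith [hk.2.2, hj.2.1]
  have hαIoo : ∀ j, j < N → ∀ θ ∈ Ioo (τ j) (τ (j+1)),
      α θ = Complex.arg (z j) + Complex.arg (Λ θ * (starRingEnd ℂ) (z j)) := by
    intro j hj θ hθ
    have hex : ∃ i, p θ i := ⟨j, hj, hθ.1, hθ.2⟩
    simp only [hαdef]
    rw [dif_pos hex, huniq θ (Nat.find hex) j (Nat.find_spec hex) ⟨hj, hθ.1, hθ.2⟩]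
  have hαexp : ∀ θ ∈ Icc (0:ℝ) (2*π), Λ θ = Complex.exp ((α θ : ℂ) * Complex.I) := by
    intro θ hθ
    simp only [hαdef]
    by_cases hex : ∃ i, p θ i
    · rw [dif_pos hex]
      have hj := (Nat.find_spec hex).1
      exact (exp_piece (hmap θ hθ) (hz1 _ hj) (exp_of_norm_one (hz1 _ hj))).symm
    · rw [dif_neg hex]
      exact (exp_of_norm_one (hmap θ hθ)).symm
  have habs : ∀ θ, |α θ| ≤ 2*π := by
    intro θ
    simp only [hαdef]
    split_ifs with h
    · refine le_trans (abs_add_le _ _) ?_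
      have h1 := Complex.abs_arg_le_pi (z (Nat.find h))
      have h2 := Complex.abs_arg_le_pi (Λ θ * (starRingEnd ℂ) (z (Nat.find h)))
      linarith
    · exact le_trans (Complex.abs_arg_le_pi _) (by linarith)
  have hαbdd : ∀ x y : ℝ, edist (α x) (α y) ≤ ENNReal.ofReal (4*π) := by
    intro x y
    rw [edist_dist, Real.dist_eq]
    apply ENNReal.ofReal_le_ofReal
    have h1 := habs x
    have h2 := habs y
    calc |α x - α y| ≤ |α x| + |α y| := abs_sub _ _
      _ ≤ 4*π := by linarith
  have hpiece : ∀ j, j < N → eVariationOn α (Icc (τ j) (τ (j+1))) ≠ ⊤ := by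
    intro j hj
    have hIcc : Icc (τ j) (τ (j+1)) = insert (τ j) (insert (τ (j+1)) (Ioo (τ j) (τ (j+1)))) := by
      rw [Set.Ioo_insert_right (hstrict j hj), Set.Ioc_insert_left (le_of_lt (hstrict j hj))]
    have hb1 : eVariationOn α (insert (τ j) (insert (τ (j+1)) (Ioo (τ j) (τ (j+1))))) ≤
        ENNReal.ofReal (4*π) + eVariationOn α (insert (τ (j+1)) (Ioo (τ j) (τ (j+1)))) := by
      refine evar_insert_left α ?_ (fun x _ => hαbdd _ _)
      intro x hx
      rcases hx with h | h
      · rw [h]; exact le_of_lt (hstrict j hj)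
      · exact le_of_lt h.1
    have hb2 : eVariationOn α (insert (τ (j+1)) (Ioo (τ j) (τ (j+1)))) ≤
        ENNReal.ofReal (4*π) + eVariationOn α (Ioo (τ j) (τ (j+1))) :=
      evar_insert_right α (fun x hx => le_of_lt hx.2) (fun x _ => hαbdd _ _)
    have hIoo : eVariationOn α (Ioo (τ j) (τ (j+1))) ≤ 2 * ENNReal.ofReal (1/2) := by
      rw [eVariationOn.eq_of_eqOn (fun θ hθ => hαIoo j hj θ hθ), evar_const_add]
      have hcmp := (argMul_lip (hz1 j hj)).comp_eVariationOn_le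
        (fun θ hθ => ⟨hmap θ (hIooSub j hj hθ), hclose2 j hj θ hθ⟩)
      refine le_trans (by simpa [Function.comp_def] using hcmp) ?_
      exact mul_le_mul_right (hosc j hj) _
    rw [hIcc]
    refine ne_top_of_le_ne_top ?_
      (le_trans hb1 (add_le_add_right (le_trans hb2 (add_le_add_right hIoo _)) _))
    refine ENNReal.add_ne_top.mpr ⟨ENNReal.ofReal_ne_top, ?_⟩
    refine ENNReal.add_ne_top.mpr ⟨ENNReal.ofReal_ne_top, ?_⟩
    exact ENNReal.mul_ne_top ENNReal.ofNat_ne_top ENNReal.ofReal_ne_top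
  have htot : ∀ j, j ≤ N → eVariationOn α (Icc (τ 0) (τ j)) ≠ ⊤ := by
    intro j hj
    induction j with
    | zero =>
      rw [Set.Icc_self, eVariationOn.subsingleton α (subsingleton_singleton)]
      exact ENNReal.zero_ne_top
    | succ j ih =>
      have e1 := eVariationOn.Icc_add_Icc α (s := univ)
        (hmono 0 j (by omega) (by omega)) (hmono j (j+1) (by omega) hj) (mem_univ (τ j))
      simp only [univ_inter] at e1
      rw [← e1]
      exact ENNReal.add_ne_top.mpr ⟨ih (by omega), hpiece j (by omega)⟩
  refine ⟨α, ?_, hαexp⟩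
  have hfin := htot N le_rfl
  rwa [hτ0, hτN] at hfin


/-- Every function of bounded variation from the circle (parametrized by
`Λ(θ) = λ(e^{iθ})`, `θ ∈ [0,2π]`, with `Λ(2π) = Λ(0)`) into the unit circle
admits an argument function of bounded variation; when `Λ` is continuous the
argument can be chosen continuous with `V(γ) ≤ (3π/2)·V(Λ)`. -/
theorem exists_BV_argument (Λ : ℝ → ℂ)
    (hmap : ∀ θ ∈ Icc (0 : ℝ) (2 * π), ‖Λ θ‖ = 1)
    (hper : Λ (2 * π) = Λ 0)
    (hBV : BoundedVariationOn Λ (Icc 0 (2 * π))) :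
    (ContinuousOn Λ (Icc 0 (2 * π)) →
      ∃ γ : ℝ → ℝ, ContinuousOn γ (Icc 0 (2 * π)) ∧
        BoundedVariationOn γ (Icc 0 (2 * π)) ∧
        (∀ θ ∈ Icc (0 : ℝ) (2 * π), Λ θ = Complex.exp (γ θ * Complex.I)) ∧
        eVariationOn γ (Icc 0 (2 * π)) ≤
          ENNReal.ofReal (3 * π / 2) * eVariationOn Λ (Icc 0 (2 * π))) ∧
    (∃ α : ℝ → ℝ, BoundedVariationOn α (Icc 0 (2 * π)) ∧
      ∀ θ ∈ Icc (0 : ℝ) (2 * π), Λ θ = Complex.exp (α θ * Complex.I)) := ⟨fun hcont => part1 Λ hmap hBV hcont, part2 Λ hmap hBV⟩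
end
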